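/- For every timed automaton A with integer constants and every non-integer bound Δ ∈ ℝ≥0 \ ℕ, the automaton A is fully Δ-ET-opaque if and only if A is fully (⌊Δ⌋ + 1/2)-ET-opaque. -/

import Mathlib

open scoped ENNReal

/-- A clock constraint with real constant: (clock index, comparison code, constant).
Comparison codes: 0 ↦ <, 1 ↦ ≤, 2 ↦ =, 3 ↦ ≥, otherwise ↦ >. -/
abbrev RConstraint := ℕ × ℕ × ℝ

/-- A guard is a (conjunction of a) list of constraints. -/
abbrev RGuard := List RConstraint

/-- An edge: (source, guard, clocks to reset, target). -/
abbrev REdge := ℕ × RGuard × List ℕ × ℕ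

/-- Satisfaction of a single constraint by a clock valuation. -/
def satC (μ : ℕ → ℝ) (c : RConstraint) : Prop :=
  match c.2.1 with
  | 0 => μ c.1 < c.2.2
  | 1 => μ c.1 ≤ c.2.2
  | 2 => μ c.1 = c.2.2
  | 3 => c.2.2 ≤ μ c.1
  | _ => c.2.2 < μ c.1

/-- Satisfaction of a guard (conjunction of constraints). -/
def satG (μ : ℕ → ℝ) (g : RGuard) : Prop := ∀ c ∈ g, satC μ c

/-- Letting time `d` elapse in a clock valuation. -/
def delayVal (μ : ℕ → ℝ) (d : ℝ) : ℕ → ℝ := fun x => μ x + d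

/-- Resetting the clocks in `R` to `0`. -/
def resetVal (μ : ℕ → ℝ) (R : List ℕ) : ℕ → ℝ := fun x => if x ∈ R then 0 else μ x

/-- A (semantic) timed automaton: locations and clocks are natural numbers,
with initial, private and final locations, invariants and edges. -/
structure RTA where
  init : ℕ
  privLoc : ℕ
  finalLoc : ℕ
  inv : ℕ → RGuard
  edges : List REdge

/-- `A.IsRunFrom ℓ μ ρ` : `ρ` (a list of (delay, edge) pairs) is a valid run of `A`
starting in state `(ℓ, μ)`: delays are nonnegative, the invariant of the current
location holds throughout each delay, each edge belongs to `A`, starts at the current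
location, its guard is satisfied after the delay, and the invariant of the target
location holds after resetting the clocks of the edge. -/
def RTA.IsRunFrom (A : RTA) : ℕ → (ℕ → ℝ) → List (ℝ × REdge) → Prop
  | _, _, [] => True
  | ℓ, μ, (d, e) :: rest =>
    0 ≤ d ∧ e ∈ A.edges ∧ e.1 = ℓ ∧
    (∀ t : ℝ, 0 ≤ t → t ≤ d → satG (delayVal μ t) (A.inv ℓ)) ∧
    satG (delayVal μ d) e.2.1 ∧
    satG (resetVal (delayVal μ d) e.2.2.1) (A.inv e.2.2.2) ∧
    RTA.IsRunFrom A e.2.2.2 (resetVal (delayVal μ d) e.2.2.1) rest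

/-- A run of `A`: a valid run from the initial state (initial location, all clocks 0). -/
def RTA.IsRun (A : RTA) (ρ : List (ℝ × REdge)) : Prop :=
  satG (fun _ => 0) (A.inv A.init) ∧ A.IsRunFrom A.init (fun _ => 0) ρ

/-- The sequence of locations visited by a run. -/
def RTA.locSeq (A : RTA) (ρ : List (ℝ × REdge)) : List ℕ :=
  A.init :: ρ.map (fun s => s.2.2.2.2)

/-- The duration of a run: the sum of its delays. -/
def runDur (ρ : List (ℝ × REdge)) : ℝ := (ρ.map Prod.fst).sum

/-- Helper scanning the reversed run: sums the delays elapsed since the last entry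
into location `p`. -/
def durPrivAux (p : ℕ) : List (ℝ × REdge) → ℝ → ℝ
  | [], acc => acc
  | (d, e) :: rest, acc => if e.2.2.2 = p then acc else durPrivAux p rest (acc + d)

/-- The time elapsed between the last entry into the private location and the end
of the run. -/
def RTA.durPriv (A : RTA) (ρ : List (ℝ × REdge)) : ℝ := durPrivAux A.privLoc ρ.reverse 0

/-- A run reaching the final location, stopped at the first occurrence of the final
location (so durations are measured up to the first occurrence of `finalLoc`). -/
def RTA.ReachesFinal (A : RTA) (ρ : List (ℝ × REdge)) : Prop :=
  A.IsRun ρ ∧ (A.locSeq ρ).getLast? = some A.finalLoc ∧ A.finalLoc ∉ (A.locSeq ρ).dropLast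

/-- A private run: reaches the final location after visiting the private location. -/
def RTA.IsPrivateRun (A : RTA) (ρ : List (ℝ × REdge)) : Prop :=
  A.ReachesFinal ρ ∧ A.privLoc ∈ (A.locSeq ρ).dropLast

/-- A public run: reaches the final location without visiting the private location. -/
def RTA.IsPublicRun (A : RTA) (ρ : List (ℝ × REdge)) : Prop :=
  A.ReachesFinal ρ ∧ A.privLoc ∉ (A.locSeq ρ).dropLast

/-- Durations of public runs. -/
def RTA.DPub (A : RTA) : Set ℝ := {t | ∃ ρ, A.IsPublicRun ρ ∧ runDur ρ = t}

/-- Durations of private runs. -/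
def RTA.DPriv (A : RTA) : Set ℝ := {t | ∃ ρ, A.IsPrivateRun ρ ∧ runDur ρ = t}

/-- Durations of private runs whose last entry into the private location happened
at most `Δ` time units before reaching the final location. -/
def RTA.DVisitLE (A : RTA) (Δ : ℝ≥0∞) : Set ℝ :=
  {t | ∃ ρ, A.IsPrivateRun ρ ∧ ENNReal.ofReal (A.durPriv ρ) ≤ Δ ∧ runDur ρ = t}

/-- Durations of private runs whose last entry into the private location happened
more than `Δ` time units before reaching the final location. -/
def RTA.DVisitGT (A : RTA) (Δ : ℝ≥0∞) : Set ℝ :=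
  {t | ∃ ρ, A.IsPrivateRun ρ ∧ Δ < ENNReal.ofReal (A.durPriv ρ) ∧ runDur ρ = t}

/-- Weak Δ-ET-opacity: `DVisit≤Δ(A) ⊆ DVisit>Δ(A) ∪ DPub(A)`. -/
def RTA.WeaklyOpaque (A : RTA) (Δ : ℝ≥0∞) : Prop :=
  A.DVisitLE Δ ⊆ A.DVisitGT Δ ∪ A.DPub

/-- Full Δ-ET-opacity: `DVisit≤Δ(A) = DVisit>Δ(A) ∪ DPub(A)`. -/
def RTA.FullyOpaque (A : RTA) (Δ : ℝ≥0∞) : Prop :=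
  A.DVisitLE Δ = A.DVisitGT Δ ∪ A.DPub

/-- A constraint with integer constant. -/
abbrev ZConstraint := ℕ × ℕ × ℤ
abbrev ZGuard := List ZConstraint
abbrev ZEdge := ℕ × ZGuard × List ℕ × ℕ

/-- A timed automaton with integer constants, as finite data. -/
structure TAData where
  init : ℕ
  privLoc : ℕ
  finalLoc : ℕ
  invs : List ZGuard
  edges : List ZEdge

def zC (c : ZConstraint) : RConstraint := (c.1, c.2.1, (c.2.2 : ℝ))

/-- The semantic timed automaton of a finite-data timed automaton. -/
def TAData.toRTA (A : TAData) : RTA where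
  init := A.init
  privLoc := A.privLoc
  finalLoc := A.finalLoc
  inv := fun ℓ => (A.invs.getD ℓ []).map zC
  edges := A.edges.map (fun e => (e.1, e.2.1.map zC, e.2.2.1, e.2.2.2))


noncomputable def pl (x1 y1 x2 y2 : ℝ) (t : ℝ) : ℝ :=
  if t < x1 then (y1 / x1) * t
  else if t < x2 then y1 + ((y2 - y1) / (x2 - x1)) * (t - x1)
  else y2 + ((1 - y2) / (1 - x2)) * (t - x2)

structure PLok (x1 y1 x2 y2 : ℝ) : Prop where
  hx0 : 0 < x1
  hx12 : x1 < x2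
  hx1 : x2 < 1
  hy0 : 0 < y1
  hy12 : y1 < y2
  hy1 : y2 < 1

namespace PLok

variable {x1 y1 x2 y2 : ℝ}

lemma pl_zero (H : PLok x1 y1 x2 y2) : pl x1 y1 x2 y2 0 = 0 := by
  rw [pl, if_pos H.hx0]; ring

lemma pl_x1 (H : PLok x1 y1 x2 y2) : pl x1 y1 x2 y2 x1 = y1 := by
  rw [pl, if_neg (lt_irrefl x1), if_pos H.hx12]; ring

lemma pl_x2 (H : PLok x1 y1 x2 y2) : pl x1 y1 x2 y2 x2 = y2 := by
  rw [pl, if_neg (by linarith [H.hx0, H.hx12] : ¬ x2 < x1), if_neg (lt_irrefl x2)]; ring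

lemma key1 (H : PLok x1 y1 x2 y2) : ∀ a, 0 ≤ a → a < x1 → pl x1 y1 x2 y2 a < y1 := by
  have hs1 : 0 < y1 / x1 := div_pos H.hy0 H.hx0
  intro a ha hax
  rw [pl, if_pos hax]
  have : (y1 / x1) * a < (y1 / x1) * x1 := (mul_lt_mul_iff_right₀ hs1).mpr hax
  rwa [div_mul_cancel₀ y1 (ne_of_gt H.hx0)] at this

lemma key2 (H : PLok x1 y1 x2 y2) :
    ∀ a, x1 ≤ a → a < x2 → y1 ≤ pl x1 y1 x2 y2 a ∧ pl x1 y1 x2 y2 a < y2 := by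
  have hs2 : 0 < (y2 - y1) / (x2 - x1) := div_pos (by linarith [H.hy12]) (by linarith [H.hx12])
  intro a ha hax
  rw [pl, if_neg (not_lt.mpr ha), if_pos hax]
  constructor
  · nlinarith [mul_nonneg hs2.le (by linarith : (0:ℝ) ≤ a - x1)]
  · have : ((y2 - y1) / (x2 - x1)) * (a - x1) < ((y2 - y1) / (x2 - x1)) * (x2 - x1) :=
      (mul_lt_mul_iff_right₀ hs2).mpr (by linarith)
    rw [div_mul_cancel₀ _ (by linarith [H.hx12] : x2 - x1 ≠ 0)] at this
    linarith

lemma key3 (H : PLok x1 y1 x2 y2) :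
    ∀ a, x2 ≤ a → a < 1 → y2 ≤ pl x1 y1 x2 y2 a ∧ pl x1 y1 x2 y2 a < 1 := by
  have hs3 : 0 < (1 - y2) / (1 - x2) := div_pos (by linarith [H.hy1]) (by linarith [H.hx1])
  intro a ha hax
  rw [pl, if_neg (not_lt.mpr (le_trans H.hx12.le ha)), if_neg (not_lt.mpr ha)]
  constructor
  · nlinarith [mul_nonneg hs3.le (by linarith : (0:ℝ) ≤ a - x2)]
  · have : ((1 - y2) / (1 - x2)) * (a - x2) < ((1 - y2) / (1 - x2)) * (1 - x2) :=
      (mul_lt_mul_iff_right₀ hs3).mpr (by linarith)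
    rw [div_mul_cancel₀ _ (by linarith [H.hx1] : 1 - x2 ≠ 0)] at this
    linarith

lemma pl_mono (H : PLok x1 y1 x2 y2) :
    ∀ a b : ℝ, 0 ≤ a → a < b → b < 1 → pl x1 y1 x2 y2 a < pl x1 y1 x2 y2 b := by
  have hs1 : 0 < y1 / x1 := div_pos H.hy0 H.hx0
  have hs2 : 0 < (y2 - y1) / (x2 - x1) := div_pos (by linarith [H.hy12]) (by linarith [H.hx12])
  have hs3 : 0 < (1 - y2) / (1 - x2) := div_pos (by linarith [H.hy1]) (by linarith [H.hx1])
  intro a b ha hab hb1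
  rcases lt_or_ge a x1 with h1 | h1
  · rcases lt_or_ge b x1 with g1 | g1
    · rw [pl, if_pos h1, pl, if_pos g1]
      exact (mul_lt_mul_iff_right₀ hs1).mpr hab
    · rcases lt_or_ge b x2 with g2 | g2
      · exact lt_of_lt_of_le (H.key1 a ha h1) (H.key2 b g1 g2).1
      · exact lt_of_lt_of_le (lt_trans (H.key1 a ha h1) H.hy12) (H.key3 b g2 hb1).1
  · rcases lt_or_ge a x2 with h2 | h2
    · rcases lt_or_ge b x2 with g2 | g2
      · rw [pl, if_neg (not_lt.mpr h1), if_pos h2, pl,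
          if_neg (not_lt.mpr (le_trans h1 hab.le)), if_pos g2]
        have := (mul_lt_mul_iff_right₀ hs2).mpr (show a - x1 < b - x1 by linarith)
        linarith
      · exact lt_of_lt_of_le (H.key2 a h1 h2).2 (H.key3 b g2 hb1).1
    · rw [pl, if_neg (not_lt.mpr (le_trans H.hx12.le h2)), if_neg (not_lt.mpr h2), pl,
        if_neg (not_lt.mpr (le_trans H.hx12.le (le_trans h2 hab.le))),
        if_neg (not_lt.mpr (le_trans h2 hab.le))]
      have := (mul_lt_mul_iff_right₀ hs3).mpr (show a - x2 < b - x2 by linarith)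
      linarith

lemma pl_lt_one (H : PLok x1 y1 x2 y2) : ∀ a, 0 ≤ a → a < 1 → pl x1 y1 x2 y2 a < 1 := by
  intro a ha ha1
  rcases lt_or_ge a x1 with h1 | h1
  · exact lt_trans (lt_trans (H.key1 a ha h1) H.hy12) H.hy1
  · rcases lt_or_ge a x2 with h2 | h2
    · exact lt_trans (H.key2 a h1 h2).2 H.hy1
    · exact (H.key3 a h2 ha1).2

end PLok
structure NiceH (h : ℝ → ℝ) : Prop where
  zero : h 0 = 0
  mono : ∀ a b : ℝ, 0 ≤ a → a < b → b < 1 → h a < h b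
  lt_one : ∀ a : ℝ, 0 ≤ a → a < 1 → h a < 1

lemma NiceH.nonneg {h : ℝ → ℝ} (H : NiceH h) {a : ℝ} (h0 : 0 ≤ a) (h1 : a < 1) : 0 ≤ h a := by
  rcases eq_or_lt_of_le h0 with e | e
  · rw [← e, H.zero]
  · have := H.mono 0 a le_rfl e h1
    rw [H.zero] at this; exact this.le

lemma PLok.nice {x1 y1 x2 y2 : ℝ} (H : PLok x1 y1 x2 y2) : NiceH (pl x1 y1 x2 y2) :=
  ⟨H.pl_zero, H.pl_mono, H.pl_lt_one⟩

noncomputable def Phi (h : ℝ → ℝ) (x : ℝ) : ℝ := (⌊x⌋ : ℝ) + h (Int.fract x)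

structure GoodF (F : ℝ → ℝ) : Prop where
  mono : StrictMono F
  shift : ∀ (x : ℝ) (k : ℤ), F (x + k) = F x + k
  zero : F 0 = 0

lemma NiceH.phi_good {h : ℝ → ℝ} (H : NiceH h) : GoodF (Phi h) := by
  refine ⟨?_, ?_, ?_⟩
  · intro x y hxy
    rcases lt_or_eq_of_le (Int.floor_le_floor hxy.le) with hf | hf
    · have h1 : Phi h x < (⌊x⌋ : ℝ) + 1 := by
        have := H.lt_one (Int.fract x) (Int.fract_nonneg x) (Int.fract_lt_one x)
        rw [Phi]; linarith
      have h2 : ((⌊x⌋ : ℝ) + 1) ≤ (⌊y⌋ : ℝ) := by exact_mod_cast Int.add_one_le_iff.mpr hf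
      have h3 : ((⌊y⌋:ℝ)) ≤ Phi h y := by
        have := H.nonneg (Int.fract_nonneg y) (Int.fract_lt_one y)
        rw [Phi]; linarith
      linarith
    · have hfr : Int.fract x < Int.fract y := by
        rw [Int.fract, Int.fract, hf]; linarith
      have := H.mono _ _ (Int.fract_nonneg x) hfr (Int.fract_lt_one y)
      rw [Phi, Phi, hf]; linarith
  · intro x k
    rw [Phi, Phi, Int.floor_add_intCast, Int.fract_add_intCast]
    push_cast; ring
  · rw [Phi]; norm_num [Int.fract]; exact H.zero

lemma GoodF.intCast {F : ℝ → ℝ} (H : GoodF F) (m : ℤ) : F (m : ℝ) = m := by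
  have := H.shift 0 m
  rw [zero_add, H.zero, zero_add] at this; exact this

lemma GoodF.sub_int {F : ℝ → ℝ} (H : GoodF F) (x : ℝ) (k : ℤ) : F (x - k) = F x - k := by
  have := H.shift (x - k) k
  rw [sub_add_cancel] at this; linarith

/-- value of `Phi h` at `(m:ℝ) + c` with `c ∈ [0,1)`. -/
lemma Phi_int_add {h : ℝ → ℝ} (m : ℤ) {c : ℝ} (h0 : 0 ≤ c) (h1 : c < 1) :
    Phi h ((m : ℝ) + c) = (m : ℝ) + h c := by
  have hc : ⌊c⌋ = 0 := Int.floor_eq_zero_iff.mpr ⟨h0, h1⟩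
  rw [Phi, Int.floor_intCast_add, Int.fract_intCast_add, Int.fract_eq_self.mpr ⟨h0, h1⟩, hc]
  push_cast; ring

lemma GoodF.lt_iff {F : ℝ → ℝ} (H : GoodF F) (a b : ℝ) (k : ℤ) :
    F a - F b < k ↔ a - b < k := by
  have h1 : F a - F b < k ↔ F a < F (b + k) := by rw [H.shift]; constructor <;> intro <;> linarith
  have h2 : a - b < (k:ℝ) ↔ a < b + k := by constructor <;> intro <;> linarith
  rw [h1, h2, H.mono.lt_iff_lt]

lemma GoodF.le_iff {F : ℝ → ℝ} (H : GoodF F) (a b : ℝ) (k : ℤ) :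
    F a - F b ≤ k ↔ a - b ≤ k := by
  have h1 : F a - F b ≤ k ↔ F a ≤ F (b + k) := by rw [H.shift]; constructor <;> intro <;> linarith
  have h2 : a - b ≤ (k:ℝ) ↔ a ≤ b + k := by constructor <;> intro <;> linarith
  rw [h1, h2, H.mono.le_iff_le]

lemma GoodF.eq_iff {F : ℝ → ℝ} (H : GoodF F) (a b : ℝ) (k : ℤ) :
    F a - F b = k ↔ a - b = k := by
  have h1 : F a - F b = k ↔ F a = F (b + k) := by rw [H.shift]; constructor <;> intro <;> linarith
  have h2 : a - b = (k:ℝ) ↔ a = b + k := by constructor <;> intro <;> linarith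
  rw [h1, h2, H.mono.injective.eq_iff]
/-! Transfer of constraints and guards under a good map -/

def IntGuard (g : RGuard) : Prop := ∀ c ∈ g, ∃ k : ℤ, c.2.2 = (k : ℝ)

lemma GoodF.satC_iff {F : ℝ → ℝ} (H : GoodF F) (c : RConstraint) (k : ℤ)
    (hk : c.2.2 = (k : ℝ)) (τ : ℝ) (r : ℕ → ℝ) :
    satC (fun x => F τ - F (r x)) c ↔ satC (fun x => τ - r x) c := by
  obtain ⟨i, cmp, K⟩ := c
  simp only at hk
  subst hk
  match cmp with
  | 0 => exact H.lt_iff τ (r i) k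
  | 1 => exact H.le_iff τ (r i) k
  | 2 => exact H.eq_iff τ (r i) k
  | 3 =>
    have := not_congr (H.lt_iff τ (r i) k)
    simp only [not_lt] at this
    simpa [satC] using this
  | (n+4) =>
    have := not_congr (H.le_iff τ (r i) k)
    simp only [not_le] at this
    simpa [satC] using this

lemma GoodF.satG_iff {F : ℝ → ℝ} (H : GoodF F) (g : RGuard) (hg : IntGuard g)
    (τ : ℝ) (r : ℕ → ℝ) :
    satG (fun x => F τ - F (r x)) g ↔ satG (fun x => τ - r x) g := by
  unfold satG
  refine forall_congr' fun c => ?_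
  refine imp_congr_right fun hc => ?_
  obtain ⟨k, hk⟩ := hg c hc
  exact H.satC_iff c k hk τ r

/-! Convexity of constraints in the delay -/

lemma satC_convex (μ : ℕ → ℝ) (c : RConstraint) (D t : ℝ)
    (h0 : satC (delayVal μ 0) c) (hD : satC (delayVal μ D) c)
    (ht0 : 0 ≤ t) (htD : t ≤ D) : satC (delayVal μ t) c := by
  obtain ⟨i, cmp, K⟩ := c
  match cmp with
  | 0 => simp only [satC, delayVal] at *; linarith
  | 1 => simp only [satC, delayVal] at *; linarith
  | 2 => simp only [satC, delayVal] at *; linarith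
  | 3 => simp only [satC, delayVal] at *; linarith
  | (n+4) => simp only [satC, delayVal] at *; linarith

lemma satG_convex (μ : ℕ → ℝ) (g : RGuard) (D t : ℝ)
    (h0 : satG (delayVal μ 0) g) (hD : satG (delayVal μ D) g)
    (ht0 : 0 ≤ t) (htD : t ≤ D) : satG (delayVal μ t) g :=
  fun c hc => satC_convex μ c D t (h0 c hc) (hD c hc) ht0 htD
/-! The time transformation of runs -/

def IntTA (B : RTA) : Prop :=
  (∀ ℓ, IntGuard (B.inv ℓ)) ∧ (∀ e ∈ B.edges, IntGuard e.2.1)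

lemma toRTA_int (A : TAData) : IntTA A.toRTA := by
  constructor
  · intro ℓ c hc
    simp only [TAData.toRTA, List.mem_map] at hc
    obtain ⟨c0, _, rfl⟩ := hc
    exact ⟨c0.2.2, rfl⟩
  · intro e he c hc
    simp only [TAData.toRTA, List.mem_map] at he
    obtain ⟨e0, _, rfl⟩ := he
    simp only [List.mem_map] at hc
    obtain ⟨c0, _, rfl⟩ := hc
    exact ⟨c0.2.2, rfl⟩

/-- transform the delays of a run, given the absolute starting time `s`. -/
noncomputable def trRun (F : ℝ → ℝ) : List (ℝ × REdge) → ℝ → List (ℝ × REdge)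
  | [], _ => []
  | (d, e) :: rest, s => (F (s + d) - F s, e) :: trRun F rest (s + d)

lemma isRunFrom_transfer (B : RTA) (hB : IntTA B) (F : ℝ → ℝ) (H : GoodF F) :
    ∀ (ρ : List (ℝ × REdge)) (ℓ : ℕ) (s : ℝ) (r : ℕ → ℝ),
      B.IsRunFrom ℓ (fun x => s - r x) ρ →
      B.IsRunFrom ℓ (fun x => F s - F (r x)) (trRun F ρ s) := by
  intro ρ
  induction ρ with
  | nil => intro ℓ s r _; trivial
  | cons q rest ih =>
    obtain ⟨d, e⟩ := q
    intro ℓ s r hrun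
    obtain ⟨hd, he, hsrc, hinv, hg, hinv', hrest⟩ := hrun
    have hd' : (0:ℝ) ≤ F (s + d) - F s := by
      rcases eq_or_lt_of_le hd with h | h
      · rw [← h, add_zero]; simp
      · have := H.mono (show s < s + d by linarith); linarith
    -- the new reset-time function after taking the edge
    set r2 : ℕ → ℝ := fun x => if x ∈ e.2.2.1 then s + d else r x with hr2
    -- old valuation after delay d
    have hval : delayVal (fun x => s - r x) d = fun x => (s + d) - r x := by
      funext x; simp [delayVal] <;> ring
    have hreset : resetVal (delayVal (fun x => s - r x) d) e.2.2.1
        = fun x => (s + d) - r2 x := by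
      funext x; simp only [resetVal, hval, hr2]
      by_cases hx : x ∈ e.2.2.1 <;> simp [hx]
    refine ⟨hd', he, hsrc, ?_, ?_, ?_, ?_⟩
    · -- invariant along the delay, via convexity
      intro t ht0 htd
      have e0 : delayVal (fun x => F s - F (r x)) 0 = fun x => F s - F (r x) := by
        funext x; simp [delayVal]
      have eD : delayVal (fun x => F s - F (r x)) (F (s + d) - F s)
          = fun x => F (s + d) - F (r x) := by
        funext x; simp [delayVal] <;> ring
      refine satG_convex _ _ (F (s + d) - F s) t ?_ ?_ ht0 htd
      · rw [e0]
        rw [H.satG_iff _ (hB.1 ℓ)]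
        have := hinv 0 le_rfl hd
        have e1 : delayVal (fun x => s - r x) 0 = fun x => s - r x := by
          funext x; simp [delayVal]
        rwa [e1] at this
      · rw [eD]
        rw [H.satG_iff _ (hB.1 ℓ)]
        have := hinv d hd le_rfl
        rwa [hval] at this
    · -- guard of the edge
      have eD : delayVal (fun x => F s - F (r x)) (F (s + d) - F s)
          = fun x => F (s + d) - F (r x) := by
        funext x; simp [delayVal] <;> ring
      rw [eD, H.satG_iff _ (hB.2 e he)]
      rwa [hval] at hg
    · -- invariant of the target after reset
      have eR : resetVal (delayVal (fun x => F s - F (r x)) (F (s + d) - F s)) e.2.2.1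
          = fun x => F (s + d) - F (r2 x) := by
        funext x; simp only [resetVal, delayVal, hr2]
        by_cases hx : x ∈ e.2.2.1 <;> simp [hx] <;> ring
      rw [eR, H.satG_iff _ (hB.1 e.2.2.2)]
      rw [hreset] at hinv'
      exact hinv'
    · -- the tail
      have eR : resetVal (delayVal (fun x => F s - F (r x)) (F (s + d) - F s)) e.2.2.1
          = fun x => F (s + d) - F (r2 x) := by
        funext x; simp only [resetVal, delayVal, hr2]
        by_cases hx : x ∈ e.2.2.1 <;> simp [hx] <;> ring
      rw [eR]
      apply ih e.2.2.2 (s + d) r2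
      rwa [hreset] at hrest
/-! Durations and location sequences of transformed runs -/

lemma runDur_nonneg_aux (B : RTA) :
    ∀ (ρ : List (ℝ × REdge)) (ℓ : ℕ) (μ : ℕ → ℝ), B.IsRunFrom ℓ μ ρ → ∀ q ∈ ρ, 0 ≤ q.1 := by
  intro ρ
  induction ρ with
  | nil => intro _ _ _ q hq; cases hq
  | cons a rest ih =>
    obtain ⟨d, e⟩ := a
    intro ℓ μ hrun q hq
    obtain ⟨hd, _, _, _, _, _, hrest⟩ := hrun
    rcases List.mem_cons.mp hq with h | h
    · rw [h]; exact hd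
    · exact ih _ _ hrest q h

lemma trRun_map_edge (F : ℝ → ℝ) :
    ∀ (ρ : List (ℝ × REdge)) (s : ℝ),
      (trRun F ρ s).map (fun q => q.2.2.2.2) = ρ.map (fun q => q.2.2.2.2) := by
  intro ρ
  induction ρ with
  | nil => intro s; rfl
  | cons a rest ih => obtain ⟨d, e⟩ := a; intro s; simp [trRun, ih]

lemma locSeq_trRun (B : RTA) (F : ℝ → ℝ) (ρ : List (ℝ × REdge)) :
    B.locSeq (trRun F ρ 0) = B.locSeq ρ := by
  rw [RTA.locSeq, RTA.locSeq, trRun_map_edge]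

lemma runDur_trRun (F : ℝ → ℝ) :
    ∀ (ρ : List (ℝ × REdge)) (s : ℝ), runDur (trRun F ρ s) = F (s + runDur ρ) - F s := by
  intro ρ
  induction ρ with
  | nil => intro s; simp [trRun, runDur]
  | cons a rest ih =>
    obtain ⟨d, e⟩ := a
    intro s
    simp only [trRun, runDur, List.map_cons, List.sum_cons]
    have := ih (s + d)
    rw [runDur] at this
    rw [this, runDur]
    ring

lemma trRun_append (F : ℝ → ℝ) :
    ∀ (l1 l2 : List (ℝ × REdge)) (s : ℝ),
      trRun F (l1 ++ l2) s = trRun F l1 s ++ trRun F l2 (s + runDur l1) := by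
  intro l1
  induction l1 with
  | nil => intro l2 s; simp [trRun, runDur]
  | cons a rest ih =>
    obtain ⟨d, e⟩ := a
    intro l2 s
    show trRun F ((d, e) :: (rest ++ l2)) s = _
    simp only [trRun, ih]
    have : s + runDur ((d, e) :: rest) = s + d + runDur rest := by
      simp only [runDur, List.map_cons, List.sum_cons]; ring
    rw [this, List.cons_append]

lemma durPrivAux_acc (p : ℕ) :
    ∀ (l : List (ℝ × REdge)) (acc : ℝ), durPrivAux p l acc = acc + durPrivAux p l 0 := by
  intro l
  induction l with
  | nil => intro acc; simp [durPrivAux]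
  | cons a rest ih =>
    obtain ⟨d, e⟩ := a
    intro acc
    simp only [durPrivAux]
    by_cases h : e.2.2.2 = p
    · simp [h]
    · rw [if_neg h, if_neg h, ih (acc + d), ih (0 + d)]; ring

lemma durPrivAux_nonneg (p : ℕ) :
    ∀ (l : List (ℝ × REdge)), (∀ q ∈ l, 0 ≤ q.1) → 0 ≤ durPrivAux p l 0 := by
  intro l
  induction l with
  | nil => intro _; simp [durPrivAux]
  | cons a rest ih =>
    obtain ⟨d, e⟩ := a
    intro hpos
    simp only [durPrivAux]
    by_cases h : e.2.2.2 = p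
    · simp [h]
    · rw [if_neg h, durPrivAux_acc]
      have h1 : (0:ℝ) ≤ d := hpos (d, e) List.mem_cons_self
      have h2 := ih (fun q hq => hpos q (List.mem_cons_of_mem _ hq))
      linarith

lemma durPriv_concat (p : ℕ) (l : List (ℝ × REdge)) (d : ℝ) (e : REdge) :
    durPrivAux p ((l ++ [(d, e)]).reverse) 0 =
      if e.2.2.2 = p then 0 else d + durPrivAux p l.reverse 0 := by
  have h1 : (l ++ [(d, e)]).reverse = (d, e) :: l.reverse := by simp
  rw [h1]
  simp only [durPrivAux]
  by_cases h : e.2.2.2 = p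
  · simp [h]
  · rw [if_neg h, if_neg h, durPrivAux_acc]; ring

lemma durPriv_trRun (p : ℕ) (F : ℝ → ℝ) (ρ : List (ℝ × REdge)) :
    ∀ s : ℝ, durPrivAux p (trRun F ρ s).reverse 0 =
      F (s + runDur ρ) - F (s + runDur ρ - durPrivAux p ρ.reverse 0) := by
  induction ρ using List.reverseRecOn with
  | nil => intro s; simp [trRun, runDur, durPrivAux]
  | append_singleton l a ih =>
    obtain ⟨d, e⟩ := a
    intro s
    have h1 : trRun F (l ++ [(d, e)]) s
        = trRun F l s ++ [(F (s + runDur l + d) - F (s + runDur l), e)] := by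
      rw [trRun_append]; rfl
    have hT : runDur (l ++ [(d, e)]) = runDur l + d := by
      simp [runDur]
    rw [h1, durPriv_concat, durPriv_concat, hT]
    by_cases h : e.2.2.2 = p
    · rw [if_pos h, if_pos h]; simp
    · rw [if_neg h, if_neg h, ih s]
      have e2 : s + (runDur l + d) - (d + durPrivAux p l.reverse 0)
          = s + runDur l - durPrivAux p l.reverse 0 := by ring
      have e1 : s + (runDur l + d) = s + runDur l + d := by ring
      rw [e2, e1]
      ring
/-! Run-level transfer -/

lemma isRun_transfer (A : TAData) {F : ℝ → ℝ} (H : GoodF F) {ρ : List (ℝ × REdge)}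
    (h : A.toRTA.IsRun ρ) : A.toRTA.IsRun (trRun F ρ 0) := by
  obtain ⟨hinv, hrun⟩ := h
  refine ⟨hinv, ?_⟩
  have h0 : (fun x : ℕ => (0:ℝ) - (fun _ : ℕ => (0:ℝ)) x) = fun _ : ℕ => (0:ℝ) := by
    funext x; ring
  have := isRunFrom_transfer A.toRTA (toRTA_int A) F H ρ A.toRTA.init 0 (fun _ => 0)
    (by rw [h0]; exact hrun)
  have h1 : (fun x : ℕ => F 0 - F ((fun _ : ℕ => (0:ℝ)) x)) = fun _ : ℕ => (0:ℝ) := by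
    funext x; simp [H.zero]
  rwa [h1] at this

lemma private_transfer (A : TAData) {F : ℝ → ℝ} (H : GoodF F) {ρ : List (ℝ × REdge)}
    (h : A.toRTA.IsPrivateRun ρ) :
    A.toRTA.IsPrivateRun (trRun F ρ 0) ∧
      runDur (trRun F ρ 0) = F (runDur ρ) ∧
      A.toRTA.durPriv (trRun F ρ 0)
        = F (runDur ρ) - F (runDur ρ - A.toRTA.durPriv ρ) := by
  obtain ⟨⟨hrun, hlast, hmem⟩, hpriv⟩ := h
  have hloc := locSeq_trRun A.toRTA F ρ
  have hdur : runDur (trRun F ρ 0) = F (runDur ρ) := by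
    rw [runDur_trRun, zero_add, H.zero, sub_zero]
  have hdp : A.toRTA.durPriv (trRun F ρ 0)
      = F (runDur ρ) - F (runDur ρ - A.toRTA.durPriv ρ) := by
    rw [RTA.durPriv, RTA.durPriv, durPriv_trRun, zero_add]
  exact ⟨⟨⟨isRun_transfer A H hrun, by rw [hloc]; exact hlast, by rw [hloc]; exact hmem⟩,
    by rw [hloc]; exact hpriv⟩, hdur, hdp⟩

lemma public_transfer (A : TAData) {F : ℝ → ℝ} (H : GoodF F) {ρ : List (ℝ × REdge)}
    (h : A.toRTA.IsPublicRun ρ) :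
    A.toRTA.IsPublicRun (trRun F ρ 0) ∧ runDur (trRun F ρ 0) = F (runDur ρ) := by
  obtain ⟨⟨hrun, hlast, hmem⟩, hpriv⟩ := h
  have hloc := locSeq_trRun A.toRTA F ρ
  have hdur : runDur (trRun F ρ 0) = F (runDur ρ) := by
    rw [runDur_trRun, zero_add, H.zero, sub_zero]
  exact ⟨⟨⟨isRun_transfer A H hrun, by rw [hloc]; exact hlast, by rw [hloc]; exact hmem⟩,
    by rw [hloc]; exact hpriv⟩, hdur⟩

lemma durPriv_nonneg (A : TAData) {ρ : List (ℝ × REdge)} (h : A.toRTA.IsRun ρ) :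
    0 ≤ A.toRTA.durPriv ρ := by
  rw [RTA.durPriv]
  apply durPrivAux_nonneg
  intro q hq
  exact runDur_nonneg_aux A.toRTA ρ _ _ h.2 q (List.mem_reverse.mp hq)

/-! Set-membership transfer -/

lemma mem_pub_transfer (A : TAData) {F : ℝ → ℝ} (H : GoodF F) {T : ℝ}
    (h : T ∈ A.toRTA.DPub) : F T ∈ A.toRTA.DPub := by
  obtain ⟨ρ, hρ, hdur⟩ := h
  obtain ⟨h1, h2⟩ := public_transfer A H hρ
  exact ⟨trRun F ρ 0, h1, by rw [h2, hdur]⟩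

lemma mem_LE_transfer (A : TAData) {F : ℝ → ℝ} (H : GoodF F) {T γ γ' : ℝ}
    (hγ' : 0 ≤ γ') (hγ : 0 ≤ γ) (hcut : F (T - γ') = F T - γ)
    (h : T ∈ A.toRTA.DVisitLE (ENNReal.ofReal γ')) :
    F T ∈ A.toRTA.DVisitLE (ENNReal.ofReal γ) := by
  obtain ⟨ρ, hρ, hle, hdur⟩ := h
  have hp : A.toRTA.durPriv ρ ≤ γ' := (ENNReal.ofReal_le_ofReal_iff hγ').mp hle
  obtain ⟨h1, h2, h3⟩ := private_transfer A H hρ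
  refine ⟨trRun F ρ 0, h1, ?_, by rw [h2, hdur]⟩
  rw [h3, hdur]
  apply ENNReal.ofReal_le_ofReal
  have : F (T - γ') ≤ F (T - A.toRTA.durPriv ρ) := H.mono.le_iff_le.mpr (by linarith)
  rw [hcut] at this
  linarith

lemma mem_GT_transfer (A : TAData) {F : ℝ → ℝ} (H : GoodF F) {T γ γ' : ℝ}
    (hγ' : 0 ≤ γ') (hγ : 0 ≤ γ) (hcut : F (T - γ') = F T - γ)
    (h : T ∈ A.toRTA.DVisitGT (ENNReal.ofReal γ')) :
    F T ∈ A.toRTA.DVisitGT (ENNReal.ofReal γ) := by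
  obtain ⟨ρ, hρ, hgt, hdur⟩ := h
  have hp : γ' < A.toRTA.durPriv ρ := by
    by_contra hcon
    push_neg at hcon
    exact absurd (ENNReal.ofReal_le_ofReal hcon) (not_le.mpr hgt)
  obtain ⟨h1, h2, h3⟩ := private_transfer A H hρ
  refine ⟨trRun F ρ 0, h1, ?_, by rw [h2, hdur]⟩
  rw [h3, hdur]
  have : F (T - A.toRTA.durPriv ρ) < F (T - γ') := H.mono (by linarith)
  rw [hcut] at this
  exact (ENNReal.ofReal_lt_ofReal_iff_of_nonneg hγ).mpr (by linarith)
/-! Construction of the pair of good maps exchanging the bounds δ and d at a duration T -/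

lemma exists_pair (T δ d : ℝ) (hδ0 : 0 < δ) (hδ1 : δ < 1) (hd0 : 0 < d) (hd1 : d < 1) :
    ∃ g f : ℝ → ℝ, GoodF g ∧ GoodF f ∧
      g (T - δ) = g T - d ∧ f (g T - d) = T - δ ∧ f (g T) = T := by
  set b := Int.fract T with hbdef
  have hb0 : 0 ≤ b := Int.fract_nonneg T
  have hb1 : b < 1 := Int.fract_lt_one T
  have hbT : (⌊T⌋ : ℝ) + b = T := Int.floor_add_fract T
  rcases lt_trichotomy b δ with hlt | heq | hgt
  · rcases eq_or_lt_of_le hb0 with hb00 | hbpos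
    · -- b = 0 : T is an integer
      have P1 : PLok ((1-δ)/2) ((1-d)/2) (1-δ) (1-d) :=
        ⟨by linarith, by linarith, by linarith, by linarith, by linarith, by linarith⟩
      have P2 : PLok ((1-d)/2) ((1-δ)/2) (1-d) (1-δ) :=
        ⟨by linarith, by linarith, by linarith, by linarith, by linarith, by linarith⟩
      have G1 := P1.nice.phi_good
      have G2 := P2.nice.phi_good
      have hTi : T = ((⌊T⌋ : ℤ) : ℝ) := by push_cast; linarith
      have hgT : Phi (pl ((1-δ)/2) ((1-d)/2) (1-δ) (1-d)) T = T := by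
        rw [hTi, G1.intCast]
      have e1 : T - δ = ((⌊T⌋ - 1 : ℤ) : ℝ) + (1 - δ) := by
        push_cast; linarith
      have e2 : T - d = ((⌊T⌋ - 1 : ℤ) : ℝ) + (1 - d) := by
        push_cast; linarith
      refine ⟨_, _, G1, G2, ?_, ?_, ?_⟩
      · rw [hgT, e1, Phi_int_add _ (by linarith) (by linarith), P1.pl_x2]
        push_cast; linarith
      · rw [hgT, e2, Phi_int_add _ (by linarith) (by linarith), P2.pl_x2]
        push_cast; linarith
      · rw [hgT, hTi, G2.intCast]
    · -- 0 < b < δ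
      have P1 : PLok b (d/2) (b+1-δ) (1-d/2) :=
        ⟨hbpos, by linarith, by linarith, by linarith, by linarith, by linarith⟩
      have P2 : PLok (d/2) b (1-d/2) (b+1-δ) :=
        ⟨by linarith, by linarith, by linarith, hbpos, by linarith, by linarith⟩
      have G1 := P1.nice.phi_good
      have G2 := P2.nice.phi_good
      have hgT : Phi (pl b (d/2) (b+1-δ) (1-d/2)) T = (⌊T⌋ : ℝ) + d/2 := by
        conv_lhs => rw [← hbT]
        rw [Phi_int_add _ hb0 hb1, P1.pl_x1]
      have e1 : T - δ = ((⌊T⌋ - 1 : ℤ) : ℝ) + (b + 1 - δ) := by push_cast; linarith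
      refine ⟨_, _, G1, G2, ?_, ?_, ?_⟩
      · rw [hgT, e1, Phi_int_add _ (by linarith) (by linarith), P1.pl_x2]
        push_cast; ring
      · rw [hgT]
        have e2 : (⌊T⌋ : ℝ) + d/2 - d = ((⌊T⌋ - 1 : ℤ) : ℝ) + (1 - d/2) := by push_cast; ring
        rw [e2, Phi_int_add _ (by linarith) (by linarith), P2.pl_x2]
        push_cast; linarith
      · rw [hgT, Phi_int_add _ (by linarith) (by linarith), P2.pl_x1]
        linarith
  · -- b = δ
    have P1 : PLok δ d ((δ+1)/2) ((d+1)/2) :=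
      ⟨hδ0, by linarith, by linarith, hd0, by linarith, by linarith⟩
    have P2 : PLok d δ ((d+1)/2) ((δ+1)/2) :=
      ⟨hd0, by linarith, by linarith, hδ0, by linarith, by linarith⟩
    have G1 := P1.nice.phi_good
    have G2 := P2.nice.phi_good
    have hgT : Phi (pl δ d ((δ+1)/2) ((d+1)/2)) T = (⌊T⌋ : ℝ) + d := by
      conv_lhs => rw [← hbT, heq]
      rw [Phi_int_add _ hδ0.le hδ1, P1.pl_x1]
    have e1 : T - δ = ((⌊T⌋ : ℤ) : ℝ) := by push_cast; linarith
    refine ⟨_, _, G1, G2, ?_, ?_, ?_⟩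
    · rw [hgT, e1, G1.intCast]; push_cast; ring
    · rw [hgT]
      have e2 : (⌊T⌋ : ℝ) + d - d = ((⌊T⌋ : ℤ) : ℝ) := by push_cast; ring
      rw [e2, G2.intCast, e1]
    · rw [hgT, Phi_int_add _ hd0.le hd1, P2.pl_x1]; linarith
  · -- δ < b
    have P1 : PLok (b-δ) ((1-d)/2) b ((1+d)/2) :=
      ⟨by linarith, by linarith, hb1, by linarith, by linarith, by linarith⟩
    have P2 : PLok ((1-d)/2) (b-δ) ((1+d)/2) b :=
      ⟨by linarith, by linarith, by linarith, by linarith, by linarith, hb1⟩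
    have G1 := P1.nice.phi_good
    have G2 := P2.nice.phi_good
    have hgT : Phi (pl (b-δ) ((1-d)/2) b ((1+d)/2)) T = (⌊T⌋ : ℝ) + (1+d)/2 := by
      conv_lhs => rw [← hbT]
      rw [Phi_int_add _ hb0 hb1, P1.pl_x2]
    have e1 : T - δ = ((⌊T⌋ : ℤ) : ℝ) + (b - δ) := by push_cast; linarith
    refine ⟨_, _, G1, G2, ?_, ?_, ?_⟩
    · rw [hgT, e1, Phi_int_add _ (by linarith) (by linarith), P1.pl_x1]
      push_cast; ring
    · rw [hgT]
      have e2 : (⌊T⌋ : ℝ) + (1+d)/2 - d = ((⌊T⌋ : ℤ) : ℝ) + (1-d)/2 := by push_cast; ring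
      rw [e2, Phi_int_add _ (by linarith) (by linarith), P2.pl_x1]
      push_cast; linarith
    · rw [hgT]
      have e3 : (⌊T⌋ : ℝ) + (1+d)/2 = ((⌊T⌋ : ℤ) : ℝ) + (1+d)/2 := by push_cast; ring
      rw [e3, Phi_int_add _ (by linarith) (by linarith), P2.pl_x2]
      linarith

lemma opaque_transfer (A : TAData) (n : ℕ) (δ d : ℝ)
    (hδ0 : 0 < δ) (hδ1 : δ < 1) (hd0 : 0 < d) (hd1 : d < 1)
    (H : A.toRTA.FullyOpaque (ENNReal.ofReal ((n:ℝ) + d))) :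
    A.toRTA.FullyOpaque (ENNReal.ofReal ((n:ℝ) + δ)) := by
  rw [RTA.FullyOpaque, Set.ext_iff] at H ⊢
  intro T
  obtain ⟨g, f, hg, hf, hcut, hfcut, hfg⟩ := exists_pair T δ d hδ0 hδ1 hd0 hd1
  have hγδ : (0:ℝ) ≤ (n:ℝ) + δ := by positivity
  have hγd : (0:ℝ) ≤ (n:ℝ) + d := by positivity
  have hcutn : g (T - ((n:ℝ) + δ)) = g T - ((n:ℝ) + d) := by
    have e : T - ((n:ℝ) + δ) = (T - δ) - ((n:ℤ) : ℝ) := by push_cast; ring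
    rw [e, hg.sub_int, hcut]; push_cast; ring
  have hfcutn : f (g T - ((n:ℝ) + d)) = T - ((n:ℝ) + δ) := by
    have e : g T - ((n:ℝ) + d) = (g T - d) - ((n:ℤ) : ℝ) := by push_cast; ring
    rw [e, hf.sub_int, hfcut]; push_cast; ring
  have hLE : T ∈ A.toRTA.DVisitLE (ENNReal.ofReal ((n:ℝ) + δ)) ↔
      g T ∈ A.toRTA.DVisitLE (ENNReal.ofReal ((n:ℝ) + d)) := by
    constructor
    · exact fun h => mem_LE_transfer A hg hγδ hγd hcutn h
    · intro h
      have := mem_LE_transfer A hf hγd hγδ (by rw [hfcutn, hfg]) h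
      rwa [hfg] at this
  have hGT : T ∈ A.toRTA.DVisitGT (ENNReal.ofReal ((n:ℝ) + δ)) ↔
      g T ∈ A.toRTA.DVisitGT (ENNReal.ofReal ((n:ℝ) + d)) := by
    constructor
    · exact fun h => mem_GT_transfer A hg hγδ hγd hcutn h
    · intro h
      have := mem_GT_transfer A hf hγd hγδ (by rw [hfcutn, hfg]) h
      rwa [hfg] at this
  have hPub : T ∈ A.toRTA.DPub ↔ g T ∈ A.toRTA.DPub := by
    constructor
    · exact fun h => mem_pub_transfer A hg h
    · intro h
      have := mem_pub_transfer A hf h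
      rwa [hfg] at this
  rw [hLE, Set.mem_union, hGT, hPub, ← Set.mem_union]
  exact H (g T)
/-- Theorem 5, full case: for every timed automaton `A` with integer
constants and every non-integer bound `Δ ∈ ℝ≥0 \ ℕ`, the automaton `A` is fully
Δ-ET-opaque iff it is fully (⌊Δ⌋ + 1/2)-ET-opaque. -/
theorem full_opacity_half (A : TAData) (Δ : ℝ) (h0 : 0 ≤ Δ) (hni : ∀ n : ℕ, Δ ≠ (n : ℝ)) :
    A.toRTA.FullyOpaque (ENNReal.ofReal Δ) ↔
      A.toRTA.FullyOpaque (ENNReal.ofReal ((⌊Δ⌋₊ : ℝ) + 1 / 2)) := by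
  set n := ⌊Δ⌋₊ with hn
  set δ := Δ - (n : ℝ) with hδ
  have hδ0 : 0 < δ := by
    have h1 : (n : ℝ) ≤ Δ := Nat.floor_le h0
    have h2 : Δ ≠ (n : ℝ) := hni n
    cases lt_or_eq_of_le h1 with
    | inl h => linarith
    | inr h => exact absurd h.symm h2
  have hδ1 : δ < 1 := by
    have := Nat.lt_floor_add_one Δ
    rw [← hn] at this; linarith
  have hΔ : Δ = (n : ℝ) + δ := by rw [hδ]; ring
  rw [hΔ]
  constructor
  · intro h
    exact opaque_transfer A n (1/2) δ (by norm_num) (by norm_num) hδ0 hδ1 h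
  · intro h
    exact opaque_transfer A n δ (1/2) hδ0 hδ1 (by norm_num) (by norm_num) h
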